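/- With L, H, q̂ as in the Legendre transform setup, a C² function f : (a,b) → ℝ satisfies the Euler–Lagrange equation d/dt[∂L/∂q̇(t,f,f')] = ∂L/∂q(t,f,f') if and only if the pair (f, g), with g(t) = ∂L/∂q̇(t,f(t),f'(t)), satisfies Hamilton's equations f' = ∂H/∂p(t,f,g), g' = −∂H/∂q(t,f,g). -/

import Mathlib

open Set Filter

private lemma legendre_hasDerivAt_v (L : ℝ → ℝ → ℝ → ℝ)
    (hL : ContDiff ℝ 2 (fun p : ℝ × ℝ × ℝ => L p.1 p.2.1 p.2.2))
    (t q v : ℝ) :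
    HasDerivAt (L t q)
      (fderiv ℝ (fun p : ℝ × ℝ × ℝ => L p.1 p.2.1 p.2.2) (t, q, v) (0, 0, 1)) v := by
  have hFd := hL.differentiable (by simp)
  have he : HasDerivAt (fun w : ℝ => ((t, q, w) : ℝ × ℝ × ℝ)) ((0:ℝ), (0:ℝ), (1:ℝ)) v :=
    HasDerivAt.prodMk (hasDerivAt_const v t) (HasDerivAt.prodMk (hasDerivAt_const v q) (hasDerivAt_id v))
  exact (hFd (t, q, v)).hasFDerivAt.comp_hasDerivAt v he

private lemma legendre_hasDerivAt_q (L : ℝ → ℝ → ℝ → ℝ)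
    (hL : ContDiff ℝ 2 (fun p : ℝ × ℝ × ℝ => L p.1 p.2.1 p.2.2))
    (t q v : ℝ) :
    HasDerivAt (fun q' => L t q' v)
      (fderiv ℝ (fun p : ℝ × ℝ × ℝ => L p.1 p.2.1 p.2.2) (t, q, v) (0, 1, 0)) q := by
  have hFd := hL.differentiable (by simp)
  have he : HasDerivAt (fun w : ℝ => ((t, w, v) : ℝ × ℝ × ℝ)) ((0:ℝ), (1:ℝ), (0:ℝ)) q :=
    HasDerivAt.prodMk (hasDerivAt_const q t) (HasDerivAt.prodMk (hasDerivAt_id q) (hasDerivAt_const q v))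
  exact (hFd (t, q, v)).hasFDerivAt.comp_hasDerivAt q he

private lemma legendre_mono (L : ℝ → ℝ → ℝ → ℝ)
    (hLeg : ∀ t q v : ℝ, 0 < deriv (deriv (L t q)) v) (t q : ℝ) :
    StrictMono (deriv (L t q)) :=
  strictMono_of_deriv_pos (hLeg t q)

private lemma legendre_contD (L : ℝ → ℝ → ℝ → ℝ)
    (hL : ContDiff ℝ 2 (fun p : ℝ × ℝ × ℝ => L p.1 p.2.1 p.2.2)) :
    Continuous fun x : ℝ × ℝ × ℝ => deriv (L x.1 x.2.1) x.2.2 := by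
  have : (fun x : ℝ × ℝ × ℝ => deriv (L x.1 x.2.1) x.2.2)
      = fun x : ℝ × ℝ × ℝ =>
        fderiv ℝ (fun p : ℝ × ℝ × ℝ => L p.1 p.2.1 p.2.2) x ((0:ℝ), (0:ℝ), (1:ℝ)) := by
    funext x
    exact (legendre_hasDerivAt_v L hL x.1 x.2.1 x.2.2).deriv
  rw [this]
  exact (hL.continuous_fderiv (by simp)).clm_apply continuous_const

private lemma legendre_cont_qhat (L : ℝ → ℝ → ℝ → ℝ)
    (hL : ContDiff ℝ 2 (fun p : ℝ × ℝ × ℝ => L p.1 p.2.1 p.2.2))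
    (hLeg : ∀ t q v : ℝ, 0 < deriv (deriv (L t q)) v)
    (qhat : ℝ → ℝ → ℝ → ℝ)
    (hqhat : ∀ t q p : ℝ, deriv (L t q) (qhat t q p) = p) :
    Continuous fun x : ℝ × ℝ × ℝ => qhat x.1 x.2.1 x.2.2 := by
  rw [continuous_iff_continuousAt]
  intro x₀
  obtain ⟨t₀, q₀, p₀⟩ := x₀
  set v₀ := qhat t₀ q₀ p₀ with hv₀
  have hcont : ∀ u : ℝ, Continuous fun x : ℝ × ℝ × ℝ => deriv (L x.1 x.2.1) u - x.2.2 := by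
    intro u
    exact ((legendre_contD L hL).comp
      (continuous_fst.prodMk (continuous_fst.comp continuous_snd |>.prodMk
        continuous_const))).sub (continuous_snd.comp continuous_snd)
  apply tendsto_order.2
  constructor
  · intro l hl
    have h1 : deriv (L t₀ q₀) l - p₀ < 0 := by
      have := (legendre_mono L hLeg t₀ q₀) hl
      rw [hqhat t₀ q₀ p₀] at this
      linarith
    have : ∀ᶠ x : ℝ × ℝ × ℝ in nhds (t₀, q₀, p₀),
        deriv (L x.1 x.2.1) l - x.2.2 < 0 := by
      have hc := (hcont l).continuousAt (x := ((t₀, q₀, p₀) : ℝ × ℝ × ℝ))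
      exact hc.eventually_lt_const h1
    filter_upwards [this] with x hx
    by_contra hle
    push_neg at hle
    have := (legendre_mono L hLeg x.1 x.2.1).monotone hle
    rw [hqhat x.1 x.2.1 x.2.2] at this
    linarith
  · intro u hu
    have h1 : 0 < deriv (L t₀ q₀) u - p₀ := by
      have := (legendre_mono L hLeg t₀ q₀) hu
      rw [hqhat t₀ q₀ p₀] at this
      linarith
    have : ∀ᶠ x : ℝ × ℝ × ℝ in nhds (t₀, q₀, p₀),
        0 < deriv (L x.1 x.2.1) u - x.2.2 := by
      have hc := (hcont u).continuousAt (x := ((t₀, q₀, p₀) : ℝ × ℝ × ℝ))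
      exact hc.eventually_const_lt h1
    filter_upwards [this] with x hx
    by_contra hle
    push_neg at hle
    have := (legendre_mono L hLeg x.1 x.2.1).monotone hle
    rw [hqhat x.1 x.2.1 x.2.2] at this
    linarith

private lemma legendre_max (L : ℝ → ℝ → ℝ → ℝ)
    (hL : ContDiff ℝ 2 (fun p : ℝ × ℝ × ℝ => L p.1 p.2.1 p.2.2))
    (hLeg : ∀ t q v : ℝ, 0 < deriv (deriv (L t q)) v)
    (qhat : ℝ → ℝ → ℝ → ℝ)
    (hqhat : ∀ t q p : ℝ, deriv (L t q) (qhat t q p) = p)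
    (t q p w : ℝ) :
    p * w - L t q w ≤ p * qhat t q p - L t q (qhat t q p) := by
  set v₀ := qhat t q p with hv₀
  have hmono : StrictMono (deriv (L t q)) := strictMono_of_deriv_pos (hLeg t q)
  have hdL : ∀ v : ℝ, HasDerivAt (L t q) (deriv (L t q) v) v := by
    intro v
    have := legendre_hasDerivAt_v L hL t q v
    exact this.deriv ▸ this
  have hdφ : ∀ v : ℝ, HasDerivAt (fun w => p * w - L t q w) (p - deriv (L t q) v) v := by
    intro v
    exact (((hasDerivAt_id v).const_mul p).sub (hdL v)).congr_deriv (by simp)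
  have hdiffφ : Differentiable ℝ (fun w => p * w - L t q w) := fun v => (hdφ v).differentiableAt
  rcases le_total w v₀ with h | h
  · have hmon : MonotoneOn (fun w => p * w - L t q w) (Icc w v₀) := by
      apply monotoneOn_of_deriv_nonneg (convex_Icc _ _) hdiffφ.continuous.continuousOn
        hdiffφ.differentiableOn
      intro x hx
      rw [interior_Icc] at hx
      rw [(hdφ x).deriv]
      have : deriv (L t q) x < p := by
        have := hmono hx.2
        rwa [hqhat t q p] at this
      linarith
    exact hmon ⟨le_refl _, h⟩ ⟨h, le_refl _⟩ h
  · have hant : AntitoneOn (fun w => p * w - L t q w) (Icc v₀ w) := by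
      apply antitoneOn_of_deriv_nonpos (convex_Icc _ _) hdiffφ.continuous.continuousOn
        hdiffφ.differentiableOn
      intro x hx
      rw [interior_Icc] at hx
      rw [(hdφ x).deriv]
      have : p < deriv (L t q) x := by
        have := hmono hx.1
        rwa [hqhat t q p] at this
      linarith
    exact hant ⟨le_refl _, h⟩ ⟨h, le_refl _⟩ h

private lemma legendre_hamilton_p (H L qhat : ℝ → ℝ → ℝ → ℝ)
    (hH : ∀ t q p, H t q p = p * qhat t q p - L t q (qhat t q p))
    (hmax : ∀ t q p w, p * w - L t q w ≤ p * qhat t q p - L t q (qhat t q p))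
    (hqc : Continuous fun x : ℝ × ℝ × ℝ => qhat x.1 x.2.1 x.2.2)
    (t q p : ℝ) : HasDerivAt (fun p' => H t q p') (qhat t q p) p := by
  rw [hasDerivAt_iff_isLittleO, Asymptotics.isLittleO_iff]
  intro c hc
  have hc1 : Continuous (fun p' : ℝ => ((t, q, p') : ℝ × ℝ × ℝ)) := by fun_prop
  have htend : Filter.Tendsto (fun p' => qhat t q p') (nhds p) (nhds (qhat t q p)) :=
    ((hqc.comp hc1).continuousAt (x := p))
  have hev : ∀ᶠ p' in nhds p, |qhat t q p' - qhat t q p| < c := by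
    have := Metric.tendsto_nhds.mp htend c hc
    simpa [Real.dist_eq] using this
  filter_upwards [hev] with p' hp'
  have h1 : (p' - p) * qhat t q p ≤ H t q p' - H t q p := by
    have := hmax t q p' (qhat t q p)
    rw [hH t q p', hH t q p]; nlinarith
  have h2 : H t q p' - H t q p ≤ (p' - p) * qhat t q p' := by
    have := hmax t q p (qhat t q p')
    rw [hH t q p', hH t q p]; nlinarith
  simp only [smul_eq_mul, Real.norm_eq_abs]
  have hE : |H t q p' - H t q p - (p' - p) * qhat t q p|
      ≤ |p' - p| * |qhat t q p' - qhat t q p| := by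
    rw [abs_le]
    constructor
    · have := abs_nonneg (p' - p)
      nlinarith [abs_nonneg (qhat t q p' - qhat t q p)]
    · calc H t q p' - H t q p - (p' - p) * qhat t q p
          ≤ (p' - p) * (qhat t q p' - qhat t q p) := by
            linarith [mul_sub (p' - p) (qhat t q p') (qhat t q p)]
        _ ≤ |(p' - p) * (qhat t q p' - qhat t q p)| := le_abs_self _
        _ = |p' - p| * |qhat t q p' - qhat t q p| := abs_mul _ _
  calc |H t q p' - H t q p - (p' - p) * qhat t q p|
      ≤ |p' - p| * |qhat t q p' - qhat t q p| := hE
    _ ≤ |p' - p| * c := mul_le_mul_of_nonneg_left hp'.le (abs_nonneg _)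
    _ = c * |p' - p| := mul_comm _ _

private lemma legendre_hamilton_q (H L qhat : ℝ → ℝ → ℝ → ℝ)
    (hH : ∀ t q p, H t q p = p * qhat t q p - L t q (qhat t q p))
    (hmax : ∀ t q p w, p * w - L t q w ≤ p * qhat t q p - L t q (qhat t q p))
    (hqc : Continuous fun x : ℝ × ℝ × ℝ => qhat x.1 x.2.1 x.2.2)
    (hdq : ∀ t q v : ℝ, HasDerivAt (fun q' => L t q' v)
      (fderiv ℝ (fun p : ℝ × ℝ × ℝ => L p.1 p.2.1 p.2.2) (t, q, v) ((0:ℝ), (1:ℝ), (0:ℝ))) q)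
    (hLqc : Continuous fun x : ℝ × ℝ × ℝ =>
      fderiv ℝ (fun p : ℝ × ℝ × ℝ => L p.1 p.2.1 p.2.2) x ((0:ℝ), (1:ℝ), (0:ℝ)))
    (t q p : ℝ) :
    HasDerivAt (fun q' => H t q' p)
      (-(fderiv ℝ (fun p : ℝ × ℝ × ℝ => L p.1 p.2.1 p.2.2) (t, q, qhat t q p)
        ((0:ℝ), (1:ℝ), (0:ℝ)))) q := by
  set F : ℝ × ℝ × ℝ → ℝ := fun x => L x.1 x.2.1 x.2.2 with hFdef
  set v₀ := qhat t q p with hv₀def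
  set m := fderiv ℝ F (t, q, v₀) ((0:ℝ), (1:ℝ), (0:ℝ)) with hmdef
  rw [hasDerivAt_iff_isLittleO, Asymptotics.isLittleO_iff]
  intro c hc
  have hLq2 : ContinuousAt (fun y : ℝ × ℝ => fderiv ℝ F (t, y.1, y.2) ((0:ℝ), (1:ℝ), (0:ℝ)))
      (q, v₀) := by
    have hc2 : Continuous fun y : ℝ × ℝ => ((t, y.1, y.2) : ℝ × ℝ × ℝ) := by fun_prop
    exact ((hLqc.comp hc2).continuousAt)
  obtain ⟨δ, hδpos, hδ⟩ := Metric.continuousAt_iff.mp hLq2 c hc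
  have hc1 : Continuous (fun q' : ℝ => ((t, q', p) : ℝ × ℝ × ℝ)) := by fun_prop
  have htend : Filter.Tendsto (fun q' => qhat t q' p) (nhds q) (nhds v₀) :=
    ((hqc.comp hc1).continuousAt (x := q))
  have hev1 : ∀ᶠ q' in nhds q, |qhat t q' p - v₀| < δ := by
    have := Metric.tendsto_nhds.mp htend δ hδpos
    simpa [Real.dist_eq] using this
  have hev2 : ∀ᶠ q' in nhds q, |q' - q| < δ := by
    have h0 : Filter.Tendsto (fun q' : ℝ => q') (nhds q) (nhds q) := tendsto_id
    have := Metric.tendsto_nhds.mp h0 δ hδpos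
    simpa [Real.dist_eq] using this
  filter_upwards [hev1, hev2] with q' hv' hq'
  set v' := qhat t q' p with hv'def
  have key : ∀ w : ℝ, |w - v₀| < δ →
      |(L t q' w - L t q w) - m * (q' - q)| ≤ c * |q' - q| := by
    intro w hw
    have hball : Convex ℝ (Metric.ball q δ) := convex_ball q δ
    have hf : ∀ x ∈ Metric.ball q δ,
        HasDerivWithinAt (fun x => L t x w - m * x)
          (fderiv ℝ F (t, x, w) ((0:ℝ), (1:ℝ), (0:ℝ)) - m) (Metric.ball q δ) x := by
      intro x _
      exact ((hdq t x w).sub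
        ((hasDerivAt_id x).const_mul m |>.congr_deriv (by ring))).hasDerivWithinAt
    have hbound : ∀ x ∈ Metric.ball q δ,
        ‖fderiv ℝ F (t, x, w) ((0:ℝ), (1:ℝ), (0:ℝ)) - m‖ ≤ c := by
      intro x hx
      have hdist : dist ((x, w) : ℝ × ℝ) (q, v₀) < δ := by
        rw [Prod.dist_eq, max_lt_iff]
        exact ⟨by simpa [Real.dist_eq] using hx, by simpa [Real.dist_eq] using hw⟩
      have := hδ hdist
      rw [Real.dist_eq] at this
      simpa [Real.norm_eq_abs] using this.le
    have hqmem : q ∈ Metric.ball q δ := Metric.mem_ball_self hδpos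
    have hq'mem : q' ∈ Metric.ball q δ := by simpa [Real.dist_eq, Metric.mem_ball] using hq'
    have := hball.norm_image_sub_le_of_norm_hasDerivWithin_le hf hbound hqmem hq'mem
    simp only [Real.norm_eq_abs] at this
    calc |(L t q' w - L t q w) - m * (q' - q)|
        = |(L t q' w - m * q') - (L t q w - m * q)| := by ring_nf
      _ ≤ c * |q' - q| := this
  have k0 := key v₀ (by simpa using hδpos)
  have k1 := key v' hv'
  have hb1 : -(L t q' v₀ - L t q v₀) ≤ H t q' p - H t q p := by
    have := hmax t q' p v₀
    rw [hH t q' p, hH t q p]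
    nlinarith
  have hb2 : H t q' p - H t q p ≤ -(L t q' v' - L t q v') := by
    have := hmax t q p v'
    rw [hH t q' p, hH t q p]
    nlinarith
  simp only [smul_eq_mul, Real.norm_eq_abs]
  rw [abs_le] at k0 k1 ⊢
  constructor
  · nlinarith [k0.1, k0.2, hb1]
  · nlinarith [k1.1, k1.2, hb2]

/-- Equivalence of the Euler–Lagrange equation and Hamilton's equations under
the Legendre transform: with `L` C², `∂²L/∂q̇² > 0`, `q̂` the inverse of the
fiber derivative `p = ∂L/∂q̇(t,q,·)` and `H(t,q,p) = p·q̂ − L(t,q,q̂)`, a C²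
function `f` satisfies `d/dt[∂L/∂q̇(t,f,f')] = ∂L/∂q(t,f,f')` on `(a,b)` iff
the pair `(f,g)`, `g(t) = ∂L/∂q̇(t,f(t),f'(t))`, satisfies
`f' = ∂H/∂p(t,f,g)` and `g' = −∂H/∂q(t,f,g)` on `(a,b)`. -/
theorem stmt10 (a b : ℝ) (hab : a < b) (L : ℝ → ℝ → ℝ → ℝ)
    (hL : ContDiff ℝ 2 (fun p : ℝ × ℝ × ℝ => L p.1 p.2.1 p.2.2))
    (hLeg : ∀ t q v : ℝ, 0 < deriv (deriv (L t q)) v)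
    (qhat : ℝ → ℝ → ℝ → ℝ)
    (hqhat : ∀ t q p : ℝ, deriv (L t q) (qhat t q p) = p)
    (huniq : ∀ t q p v : ℝ, deriv (L t q) v = p → v = qhat t q p)
    (H : ℝ → ℝ → ℝ → ℝ)
    (hH : ∀ t q p : ℝ, H t q p = p * qhat t q p - L t q (qhat t q p))
    (f : ℝ → ℝ) (hf : ContDiff ℝ 2 f)
    (g : ℝ → ℝ) (hg : ∀ t, g t = deriv (L t (f t)) (deriv f t)) :
    (∀ t ∈ Set.Ioo a b,
        deriv (fun s => deriv (L s (f s)) (deriv f s)) t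
          = deriv (fun q' => L t q' (deriv f t)) (f t))
      ↔ (∀ t ∈ Set.Ioo a b,
          deriv f t = deriv (fun p => H t (f t) p) (g t) ∧
          deriv g t = -deriv (fun q' => H t q' (g t)) (f t)) := by
  have hmax := legendre_max L hL hLeg qhat hqhat
  have hqc := legendre_cont_qhat L hL hLeg qhat hqhat
  have hdq := legendre_hasDerivAt_q L hL
  have hLqc : Continuous fun x : ℝ × ℝ × ℝ =>
      fderiv ℝ (fun p : ℝ × ℝ × ℝ => L p.1 p.2.1 p.2.2) x ((0:ℝ), (1:ℝ), (0:ℝ)) :=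
    (hL.continuous_fderiv (by simp)).clm_apply continuous_const
  have HP := legendre_hamilton_p H L qhat hH hmax hqc
  have HQ := legendre_hamilton_q H L qhat hH hmax hqc hdq hLqc
  have hgfun : g = fun s => deriv (L s (f s)) (deriv f s) := funext hg
  have hvq : ∀ t, qhat t (f t) (g t) = deriv f t := fun t =>
    (huniq t (f t) (g t) (deriv f t) (hg t).symm).symm
  have e1 : ∀ t, deriv (fun p => H t (f t) p) (g t) = deriv f t := by
    intro t
    rw [(HP t (f t) (g t)).deriv, hvq t]
  have e2 : ∀ t, deriv (fun q' => H t q' (g t)) (f t)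
      = -(deriv (fun q' => L t q' (deriv f t)) (f t)) := by
    intro t
    rw [(HQ t (f t) (g t)).deriv, hvq t, (hdq t (f t) (deriv f t)).deriv]
  constructor
  · intro hEL t ht
    refine ⟨(e1 t).symm, ?_⟩
    rw [e2 t, neg_neg, ← hEL t ht, hgfun]
  · intro hHam t ht
    have h2 := (hHam t ht).2
    rw [e2 t, neg_neg] at h2
    rw [← hgfun]
    exact h2
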